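/- Let ψ_θ := (cos(θ/2), sin(θ/2)) ∈ ℂ², let φ₀ := ψ_{3π/4}, φ₁ := ψ_{7π/4} (Charlie's measurement basis), e₀ := (1,0), e₁ := (0,1) (the Z basis), f₀ := (1/√2)(1,1), f₁ := (1/√2)(1,−1) (the X basis), and θ₀ := π/4, θ₁ := 5π/4 (Alice's preparations). Define the distributions on {0,1}²: wp₁(c,d) := Σ_{a∈{0,1}} (1/2)·|⟨φ_c, ψ_{θ_a}⟩|²·|⟨e_d, φ_c⟩|²; wp₂(c,b) := Σ_{a∈{0,1}} (1/2)·|⟨φ_c, ψ_{θ_a}⟩|²·|⟨f_b, φ_c⟩|²; wp₃(a,d) := (1/2)·|⟨e_d, ψ_{θ_a}⟩|²; wp₄(a,b) := (1/2)·|⟨f_b, ψ_{θ_a}⟩|². Then the correlators Σ (−1)^{c+d}·wp₁(c,d) = −1/√2, Σ (−1)^{c+b}·wp₂(c,b) = 1/√2, Σ (−1)^{a+d}·wp₃(a,d) = 1/√2, and Σ (−1)^{a+b}·wp₄(a,b) = 1/√2. -/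

import Mathlib

/-- The qubit state `ψ_θ = (cos(θ/2), sin(θ/2))`. -/
noncomputable def psi (θ : ℝ) : Fin 2 → ℂ :=
  ![(Real.cos (θ / 2) : ℂ), (Real.sin (θ / 2) : ℂ)]

/-- The standard Hermitian inner product on `ℂ²` (conjugate-linear in the first slot). -/
noncomputable def qinner (u v : Fin 2 → ℂ) : ℂ := ∑ i : Fin 2, star (u i) * v i

/-- Charlie's measurement basis `φ₀ = ψ_{3π/4}`, `φ₁ = ψ_{7π/4}`. -/
noncomputable def φ : Fin 2 → Fin 2 → ℂ := ![psi (3 * Real.pi / 4), psi (7 * Real.pi / 4)]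

/-- The `Z` basis `e₀ = (1,0)`, `e₁ = (0,1)`. -/
noncomputable def eZ : Fin 2 → Fin 2 → ℂ := ![![1, 0], ![0, 1]]

/-- The `X` basis `f₀ = (1/√2)(1,1)`, `f₁ = (1/√2)(1,−1)`. -/
noncomputable def fX : Fin 2 → Fin 2 → ℂ :=
  ![![((1 / Real.sqrt 2 : ℝ) : ℂ), ((1 / Real.sqrt 2 : ℝ) : ℂ)],
    ![((1 / Real.sqrt 2 : ℝ) : ℂ), ((-(1 / Real.sqrt 2) : ℝ) : ℂ)]]

lemma normSq_real (x : ℝ) : Complex.normSq (x : ℂ) = x ^ 2 := by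
  rw [Complex.normSq_ofReal]; ring

lemma inner_psi_psi (α β : ℝ) :
    Complex.normSq (qinner (psi α) (psi β)) = Real.cos ((α - β) / 2) ^ 2 := by
  have h : qinner (psi α) (psi β) = ((Real.cos ((α - β) / 2) : ℝ) : ℂ) := by
    simp only [qinner, psi, Fin.sum_univ_two, Matrix.cons_val_zero, Matrix.cons_val_one,
      Matrix.head_cons, Complex.star_def, Complex.conj_ofReal]
    norm_cast
    rw [show (α - β)/2 = α/2 - β/2 by ring, Real.cos_sub]
  rw [h, normSq_real]

lemma key_sq (x : ℝ) : Real.cos (x/2)^2 - Real.sin (x/2)^2 = Real.cos x := by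
  have h : Real.cos (2 * (x/2)) = 2 * Real.cos (x/2) ^ 2 - 1 := Real.cos_two_mul _
  rw [show 2 * (x/2) = x by ring] at h
  nlinarith [Real.sin_sq_add_cos_sq (x/2)]

lemma inner_eZ0 (α : ℝ) :
    Complex.normSq (qinner (eZ 0) (psi α)) = Real.cos (α/2) ^ 2 := by
  have h : qinner (eZ 0) (psi α) = ((Real.cos (α/2) : ℝ) : ℂ) := by
    simp [qinner, eZ, psi, Fin.sum_univ_two]
  rw [h, normSq_real]

lemma inner_eZ1 (α : ℝ) :
    Complex.normSq (qinner (eZ 1) (psi α)) = Real.sin (α/2) ^ 2 := by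
  have h : qinner (eZ 1) (psi α) = ((Real.sin (α/2) : ℝ) : ℂ) := by
    simp [qinner, eZ, psi, Fin.sum_univ_two]
  rw [h, normSq_real]

lemma inner_fX0 (α : ℝ) :
    Complex.normSq (qinner (fX 0) (psi α)) = (1 + Real.sin α) / 2 := by
  have h : qinner (fX 0) (psi α)
      = (((1 / Real.sqrt 2) * (Real.cos (α/2) + Real.sin (α/2)) : ℝ) : ℂ) := by
    simp only [qinner, fX, psi, Fin.sum_univ_two, Matrix.cons_val_zero, Matrix.cons_val_one,
      Matrix.head_cons, Complex.star_def, Complex.conj_ofReal]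
    push_cast; ring
  rw [h, normSq_real]
  have h2 : Real.sqrt 2 ^ 2 = 2 := Real.sq_sqrt (by norm_num)
  have h0 : Real.sqrt 2 ≠ 0 := by positivity
  have hs : Real.sin α = 2 * Real.sin (α/2) * Real.cos (α/2) := by
    have := Real.sin_two_mul (α/2); rw [show 2 * (α/2) = α by ring] at this; linarith
  have hp := Real.sin_sq_add_cos_sq (α/2)
  field_simp
  nlinarith

lemma inner_fX1 (α : ℝ) :
    Complex.normSq (qinner (fX 1) (psi α)) = (1 - Real.sin α) / 2 := by
  have h : qinner (fX 1) (psi α)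
      = (((1 / Real.sqrt 2) * (Real.cos (α/2) - Real.sin (α/2)) : ℝ) : ℂ) := by
    simp only [qinner, fX, psi, Fin.sum_univ_two, Matrix.cons_val_zero, Matrix.cons_val_one,
      Matrix.head_cons, Complex.star_def, Complex.conj_ofReal]
    push_cast; ring
  rw [h, normSq_real]
  have h2 : Real.sqrt 2 ^ 2 = 2 := Real.sq_sqrt (by norm_num)
  have h0 : Real.sqrt 2 ≠ 0 := by positivity
  have hs : Real.sin α = 2 * Real.sin (α/2) * Real.cos (α/2) := by
    have := Real.sin_two_mul (α/2); rw [show 2 * (α/2) = α by ring] at this; linarith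
  have hp := Real.sin_sq_add_cos_sq (α/2)
  field_simp
  nlinarith

/-- Alice's preparation angles `θ₀ = π/4`, `θ₁ = 5π/4`. -/
noncomputable def θA : Fin 2 → ℝ := ![Real.pi / 4, 5 * Real.pi / 4]

/-- The sign `(-1)^u` associated to an outcome `u ∈ {0,1}`. -/
noncomputable def sgn (u : Fin 2) : ℝ := (-1 : ℝ) ^ (u : ℕ)

/-- Born-rule distribution for `(c,d)` (settings `x = 0`, `y = 0`). -/
noncomputable def wp1 (c d : Fin 2) : ℝ :=
  ∑ a : Fin 2, (1 / 2) * Complex.normSq (qinner (φ c) (psi (θA a)))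
    * Complex.normSq (qinner (eZ d) (φ c))

/-- Born-rule distribution for `(c,b)` (settings `x = 0`, `y = 1`). -/
noncomputable def wp2 (c b : Fin 2) : ℝ :=
  ∑ a : Fin 2, (1 / 2) * Complex.normSq (qinner (φ c) (psi (θA a)))
    * Complex.normSq (qinner (fX b) (φ c))

/-- Born-rule distribution for `(a,d)` (settings `x = 1`, `y = 0`). -/
noncomputable def wp3 (a d : Fin 2) : ℝ :=
  (1 / 2) * Complex.normSq (qinner (eZ d) (psi (θA a)))

/-- Born-rule distribution for `(a,b)` (settings `x = 1`, `y = 1`). -/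
noncomputable def wp4 (a b : Fin 2) : ℝ :=
  (1 / 2) * Complex.normSq (qinner (fX b) (psi (θA a)))

/-- The Born-rule predictions of the Operational Friendliness protocol:
the four empirical correlators equal `−1/√2, 1/√2, 1/√2, 1/√2`. -/
theorem operational_friendliness_quantum_correlators :
    (∑ c : Fin 2, ∑ d : Fin 2, sgn c * sgn d * wp1 c d = -(1 / Real.sqrt 2)) ∧
    (∑ c : Fin 2, ∑ b : Fin 2, sgn c * sgn b * wp2 c b = 1 / Real.sqrt 2) ∧
    (∑ a : Fin 2, ∑ d : Fin 2, sgn a * sgn d * wp3 a d = 1 / Real.sqrt 2) ∧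
    (∑ a : Fin 2, ∑ b : Fin 2, sgn a * sgn b * wp4 a b = 1 / Real.sqrt 2) := by
  have s2 : Real.sqrt 2 * Real.sqrt 2 = 2 := Real.mul_self_sqrt (by norm_num)
  have hinv : (1:ℝ) / Real.sqrt 2 = Real.sqrt 2 / 2 := by
    have h0 : Real.sqrt 2 ≠ 0 := by positivity
    field_simp
    linarith [Real.sq_sqrt (show (0:ℝ) ≤ 2 by norm_num)]
  have cpi4 : Real.cos (Real.pi/4) = Real.sqrt 2 / 2 := Real.cos_pi_div_four
  have spi4 : Real.sin (Real.pi/4) = Real.sqrt 2 / 2 := Real.sin_pi_div_four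
  have c34 : Real.cos (3*Real.pi/4) = -(Real.sqrt 2/2) := by
    rw [show 3*Real.pi/4 = Real.pi - Real.pi/4 by ring, Real.cos_pi_sub, cpi4]
  have s34 : Real.sin (3*Real.pi/4) = Real.sqrt 2/2 := by
    rw [show 3*Real.pi/4 = Real.pi - Real.pi/4 by ring, Real.sin_pi_sub, spi4]
  have c54 : Real.cos (5*Real.pi/4) = -(Real.sqrt 2/2) := by
    rw [show 5*Real.pi/4 = Real.pi + Real.pi/4 by ring, Real.cos_add, Real.cos_pi,
      Real.sin_pi, cpi4]; ring
  have s54 : Real.sin (5*Real.pi/4) = -(Real.sqrt 2/2) := by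
    rw [show 5*Real.pi/4 = Real.pi + Real.pi/4 by ring, Real.sin_add, Real.cos_pi,
      Real.sin_pi, spi4]; ring
  have c74 : Real.cos (7*Real.pi/4) = Real.sqrt 2/2 := by
    rw [show 7*Real.pi/4 = 2*Real.pi - Real.pi/4 by ring, Real.cos_two_pi_sub, cpi4]
  have s74 : Real.sin (7*Real.pi/4) = -(Real.sqrt 2/2) := by
    rw [show 7*Real.pi/4 = Real.pi + 3*Real.pi/4 by ring, Real.sin_add, Real.cos_pi,
      Real.sin_pi, s34]; ring
  -- the four ψ-overlap squares
  have A00 : Real.cos ((3*Real.pi/4 - Real.pi/4)/2)^2 = 1/2 := by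
    rw [show (3*Real.pi/4 - Real.pi/4)/2 = Real.pi/4 by ring, cpi4]; nlinarith
  have A01 : Real.cos ((3*Real.pi/4 - 5*Real.pi/4)/2)^2 = 1/2 := by
    rw [show (3*Real.pi/4 - 5*Real.pi/4)/2 = -(Real.pi/4) by ring, Real.cos_neg, cpi4]; nlinarith
  have A10 : Real.cos ((7*Real.pi/4 - Real.pi/4)/2)^2 = 1/2 := by
    rw [show (7*Real.pi/4 - Real.pi/4)/2 = 3*Real.pi/4 by ring, c34]; nlinarith
  have A11 : Real.cos ((7*Real.pi/4 - 5*Real.pi/4)/2)^2 = 1/2 := by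
    rw [show (7*Real.pi/4 - 5*Real.pi/4)/2 = Real.pi/4 by ring, cpi4]; nlinarith
  have k34 := key_sq (3*Real.pi/4)
  have k74 := key_sq (7*Real.pi/4)
  have k14 := key_sq (Real.pi/4)
  have k54 := key_sq (5*Real.pi/4)
  refine ⟨?_, ?_, ?_, ?_⟩
  · simp only [wp1, sgn, φ, θA, Fin.sum_univ_two, Matrix.cons_val_zero, Matrix.cons_val_one,
      Matrix.head_cons, Fin.val_zero, Fin.val_one, pow_zero, pow_one,
      inner_psi_psi, inner_eZ0, inner_eZ1]
    rw [A00, A01, A10, A11, hinv]; linarith [k34, k74]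
  · simp only [wp2, sgn, φ, θA, Fin.sum_univ_two, Matrix.cons_val_zero, Matrix.cons_val_one,
      Matrix.head_cons, Fin.val_zero, Fin.val_one, pow_zero, pow_one,
      inner_psi_psi, inner_fX0, inner_fX1]
    rw [A00, A01, A10, A11, s34, s74, hinv]; ring
  · simp only [wp3, sgn, θA, Fin.sum_univ_two, Matrix.cons_val_zero, Matrix.cons_val_one,
      Matrix.head_cons, Fin.val_zero, Fin.val_one, pow_zero, pow_one,
      inner_eZ0, inner_eZ1]
    rw [hinv]; linarith [k14, k54]
  · simp only [wp4, sgn, θA, Fin.sum_univ_two, Matrix.cons_val_zero, Matrix.cons_val_one,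
      Matrix.head_cons, Fin.val_zero, Fin.val_one, pow_zero, pow_one,
      inner_fX0, inner_fX1]
    rw [spi4, s54, hinv]; ring
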